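/- Let L be any normal modal logic with the universal modality such that K_u ⊆ L ⊆ K4_u, and let ψ(𝔟) = (AxP ∧ ∃ε(s,α^1_m,α^2_n)) → ∃ε(t,α^1_k,α^2_l) for a configuration 𝔟 = ⟨t,k,l⟩. If P : 𝔞 ↛ 𝔟 (𝔟 is not reachable from 𝔞 = ⟨s,m,n⟩), then ψ(𝔟) is not unifiable in L: for every substitution σ, σ(ψ(𝔟)) ∉ L. -/

import Mathlib

/-- Modal formulas with a box □ and the universal modality ∀ (ubox). -/
inductive MFU : Type where
  | var : Nat → MFU
  | bot : MFU
  | neg : MFU → MFU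
  | and : MFU → MFU → MFU
  | box : MFU → MFU
  | ubox : MFU → MFU

namespace MFU
def top : MFU := neg bot
def or (φ ψ : MFU) : MFU := neg (and (neg φ) (neg ψ))
def imp (φ ψ : MFU) : MFU := or (neg φ) ψ
def dia (φ : MFU) : MFU := neg (box (neg φ))
/-- ∃φ, the universal diamond. -/
def uEx (φ : MFU) : MFU := neg (ubox (neg φ))
def subst (σ : Nat → MFU) : MFU → MFU
  | .var n => σ n
  | .bot => .bot
  | .neg φ => .neg (subst σ φ)
  | .and φ ψ => .and (subst σ φ) (subst σ ψ)
  | .box φ => .box (subst σ φ)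
  | .ubox φ => .ubox (subst σ φ)
end MFU

/-- Truth at a point of a Kripke model, with ∀ interpreted by W × W. -/
def satU {W : Type} (R : W → W → Prop) (V : Nat → W → Prop) : W → MFU → Prop
  | x, .var n => V n x
  | _, .bot => False
  | x, .neg φ => ¬ satU R V x φ
  | x, .and φ ψ => satU R V x φ ∧ satU R V x ψ
  | x, .box φ => ∀ y, R x y → satU R V y φ
  | _, .ubox φ => ∀ y, satU R V y φ
namespace MFU
/- The variable-free Chagrov formulas (in the language with the universal modality). -/
def fα : MFU := and (dia top) (box (dia top))
def fβ : MFU := box bot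
def fγ : MFU := and (dia fα) (and (dia fβ) (neg (dia (dia fβ))))
def fδ : MFU := and (neg fγ) (and (dia fβ) (neg (dia (dia fβ))))
def fδ₁ : MFU := and (dia fδ) (neg (dia (dia fδ)))
def fδ₂ : MFU := and (dia fδ₁) (neg (dia (dia fδ₁)))
def fγ₁ : MFU := and (dia fγ) (and (neg (dia (dia fγ))) (neg (dia fδ)))
def fγ₂ : MFU := and (dia fγ₁) (and (neg (dia (dia fγ₁))) (neg (dia fδ)))
def α₀ : Nat → MFU
  | 0 => and (dia fγ) (and (dia fδ) (and (neg (dia (dia fγ))) (neg (dia (dia fδ)))))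
  | 1 => and (dia fγ₁) (and (dia fδ₁) (and (neg (dia (dia fγ₁))) (neg (dia (dia fδ₁)))))
  | 2 => and (dia fγ₂) (and (dia fδ₂) (and (neg (dia (dia fγ₂))) (neg (dia (dia fδ₂)))))
  | _ => bot
def others (i : Nat) : MFU :=
  ((((List.range 3).filter (· ≠ i))).map (fun k => neg (dia (α₀ k)))).foldr MFU.and MFU.top
def alpha (i : Nat) : Nat → MFU
  | 0 => α₀ i
  | (j+1) => and (dia (α₀ i)) (and (dia (alpha i j)) (and (neg (dia (dia (alpha i j)))) (others i)))
/-- ε(t,φ,ψ) = ◇α^0_t ∧ ¬◇α^0_{t+1} ∧ ◇φ ∧ ¬◇◇φ ∧ ◇ψ ∧ ¬◇◇ψ. -/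
def eps (t : Nat) (φ ψ : MFU) : MFU :=
  and (dia (alpha 0 t)) (and (neg (dia (alpha 0 (t+1))))
    (and (dia φ) (and (neg (dia (dia φ))) (and (dia ψ) (neg (dia (dia ψ)))))))
/-- π₁ (with p₁ = var 0). -/
def π₁ : MFU :=
  and (or (dia (α₀ 1)) (α₀ 1)) (and (neg (dia (α₀ 0))) (and (neg (dia (α₀ 2)))
    (and (var 0) (neg (dia (var 0))))))
/-- π₂ (with p₁ = var 0). -/
def π₂ : MFU :=
  and (dia (α₀ 1)) (and (neg (dia (α₀ 0))) (and (neg (dia (α₀ 2)))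
    (and (dia (var 0)) (neg (dia (dia (var 0)))))))
/-- τ₁ (with p₂ = var 1). -/
def τ₁ : MFU :=
  and (or (dia (α₀ 2)) (α₀ 2)) (and (neg (dia (α₀ 0))) (and (neg (dia (α₀ 1)))
    (and (var 1) (neg (dia (var 1))))))
/-- τ₂ (with p₂ = var 1). -/
def τ₂ : MFU :=
  and (dia (α₀ 2)) (and (neg (dia (α₀ 0))) (and (neg (dia (α₀ 1)))
    (and (dia (var 1)) (neg (dia (dia (var 1)))))))
end MFU
/-- Instructions of a Minsky (two-register) machine. -/
inductive Instr : Type where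
  | inc1 (s t : Nat)            -- s → ⟨t,1,0⟩
  | inc2 (s t : Nat)            -- s → ⟨t,0,1⟩
  | dec1 (s t t' : Nat)         -- s → ⟨t,-1,0⟩(⟨t',0,0⟩)
  | dec2 (s t t' : Nat)         -- s → ⟨t,0,-1⟩(⟨t',0,0⟩)
deriving DecidableEq

abbrev Config := Nat × Nat × Nat

def Instr.src : Instr → Nat
  | .inc1 s _ => s
  | .inc2 s _ => s
  | .dec1 s _ _ => s
  | .dec2 s _ _ => s

/-- One-step transformation of configurations by an instruction. -/
def Instr.Step : Instr → Config → Config → Prop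
  | .inc1 s t, (s₁, m, n), c => s₁ = s ∧ c = (t, m+1, n)
  | .inc2 s t, (s₁, m, n), c => s₁ = s ∧ c = (t, m, n+1)
  | .dec1 s t t', (s₁, m, n), c =>
      s₁ = s ∧ ((m ≠ 0 ∧ c = (t, m-1, n)) ∨ (m = 0 ∧ c = (t', 0, n)))
  | .dec2 s t t', (s₁, m, n), c =>
      s₁ = s ∧ ((n ≠ 0 ∧ c = (t, m, n-1)) ∨ (n = 0 ∧ c = (t', m, 0)))

/-- P : 𝔞 → 𝔟 : reachability in finitely many (possibly zero) steps. -/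
def Reach (P : List Instr) : Config → Config → Prop :=
  Relation.ReflTransGen (fun c c' => ∃ I ∈ P, I.Step c c')

/-- At most one instruction with a given state on the left-hand side. -/
def Deterministic (P : List Instr) : Prop :=
  ∀ I ∈ P, ∀ J ∈ P, I.src = J.src → I = J
/-- The points of the frame 𝔉 of Fig. 1. -/
inductive Pt : Type where
  | a | b | g | g1 | g2 | d | d1 | d2
  | chain (i j : Nat)          -- the point a^i_j
  | e (t k l : Nat)            -- the point e(t,k,l)
deriving DecidableEq

/-- Membership in the frame: e(t,k,l) exists only for reachable configurations. -/
def Pt.Ok (P : List Instr) (c₀ : Config) : Pt → Prop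
  | .chain i _ => i ≤ 2
  | .e t k l => Reach P c₀ (t, k, l)
  | _ => True

/-- The base relation whose transitive closure is the accessibility relation of 𝔉. -/
def Pt.R0 : Pt → Pt → Prop
  | .a, .a => True
  | .g, .a => True
  | .g, .b => True
  | .d, .b => True
  | .g1, .g => True
  | .g2, .g1 => True
  | .d1, .d => True
  | .d2, .d1 => True
  | .chain 0 0, .g => True
  | .chain 0 0, .d => True
  | .chain 1 0, .g1 => True
  | .chain 1 0, .d1 => True
  | .chain 2 0, .g2 => True
  | .chain 2 0, .d2 => True
  | .chain i (j+1), .chain i' j' => i = i' ∧ j = j'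
  | .e t _ _, .chain 0 t' => t = t'
  | .e _ k _, .chain 1 k' => k = k'
  | .e _ _ l, .chain 2 l' => l = l'
  | _, _ => False

/-- The carrier of the frame 𝔉 built from P and 𝔞 = c₀. -/
def FW (P : List Instr) (c₀ : Config) : Type := {p : Pt // Pt.Ok P c₀ p}

/-- The accessibility relation of 𝔉: the transitive closure of R0. -/
def FR (P : List Instr) (c₀ : Config) : FW P c₀ → FW P c₀ → Prop :=
  fun x y => Relation.TransGen Pt.R0 x.1 y.1
/-- The formula AxI associated with an instruction I. -/
def AxI : Instr → MFU
  | .inc1 t t' => MFU.imp (MFU.uEx (MFU.eps t MFU.π₁ MFU.τ₁)) (MFU.uEx (MFU.eps t' MFU.π₂ MFU.τ₁))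
  | .inc2 t t' => MFU.imp (MFU.uEx (MFU.eps t MFU.π₁ MFU.τ₁)) (MFU.uEx (MFU.eps t' MFU.π₁ MFU.τ₂))
  | .dec1 t t' t'' =>
      MFU.and (MFU.imp (MFU.uEx (MFU.eps t MFU.π₂ MFU.τ₁)) (MFU.uEx (MFU.eps t' MFU.π₁ MFU.τ₁)))
        (MFU.imp (MFU.uEx (MFU.eps t (MFU.α₀ 1) MFU.τ₁)) (MFU.uEx (MFU.eps t'' (MFU.α₀ 1) MFU.τ₁)))
  | .dec2 t t' t'' =>
      MFU.and (MFU.imp (MFU.uEx (MFU.eps t MFU.π₁ MFU.τ₂)) (MFU.uEx (MFU.eps t' MFU.π₁ MFU.τ₁)))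
        (MFU.imp (MFU.uEx (MFU.eps t MFU.π₁ (MFU.α₀ 2))) (MFU.uEx (MFU.eps t'' MFU.π₁ (MFU.α₀ 2))))

/-- AxP = ⋀_{I ∈ P} AxI. -/
def AxP (P : List Instr) : MFU := (P.map AxI).foldr MFU.and MFU.top

/-- K_u: the formulas valid in all frames. -/
def Ku : Set MFU :=
  {φ | ∀ (W : Type) (R : W → W → Prop) (V : Nat → W → Prop) (x : W), satU R V x φ}

/-- K4_u: the formulas valid in all transitive frames. -/
def K4u : Set MFU :=
  {φ | ∀ (W : Type) (R : W → W → Prop), Transitive R →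
    ∀ (V : Nat → W → Prop) (x : W), satU R V x φ}

/-- ψ(𝔟) = (AxP ∧ ∃ε(s,α^1_m,α^2_n)) → ∃ε(t,α^1_k,α^2_l). -/
def psiB (P : List Instr) (s m n t k l : Nat) : MFU :=
  MFU.imp (MFU.and (AxP P) (MFU.uEx (MFU.eps s (MFU.alpha 1 m) (MFU.alpha 2 n))))
    (MFU.uEx (MFU.eps t (MFU.alpha 1 k) (MFU.alpha 2 l)))

/-- Explicit description of the transitive closure of R0. -/
def RT : Pt → Pt → Prop
  | .a, y => y = .a
  | .b, _ => False
  | .g, y => y = .a ∨ y = .b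
  | .d, y => y = .b
  | .g1, y => y = .g ∨ y = .a ∨ y = .b
  | .d1, y => y = .d ∨ y = .b
  | .g2, y => y = .g1 ∨ y = .g ∨ y = .a ∨ y = .b
  | .d2, y => y = .d1 ∨ y = .d ∨ y = .b
  | .chain i j, y => (∃ j', j' < j ∧ y = .chain i j') ∨
      (i = 0 ∧ (y = .g ∨ y = .d ∨ y = .a ∨ y = .b)) ∨
      (i = 1 ∧ (y = .g1 ∨ y = .d1 ∨ y = .g ∨ y = .d ∨ y = .a ∨ y = .b)) ∨
      (i = 2 ∧ (y = .g2 ∨ y = .d2 ∨ y = .g1 ∨ y = .d1 ∨ y = .g ∨ y = .d ∨ y = .a ∨ y = .b))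
  | .e t k l, y => (∃ j, j ≤ t ∧ y = .chain 0 j) ∨ (∃ j, j ≤ k ∧ y = .chain 1 j) ∨
      (∃ j, j ≤ l ∧ y = .chain 2 j) ∨
      (y = .g ∨ y = .d ∨ y = .g1 ∨ y = .d1 ∨ y = .g2 ∨ y = .d2 ∨ y = .a ∨ y = .b)

lemma R0_sub_RT : ∀ x y, Pt.R0 x y → RT x y := by
  intro x y h
  unfold Pt.R0 at h
  split at h <;> simp_all [RT] <;> omega

lemma RT_R0_trans : ∀ x y z, RT x y → Pt.R0 y z → RT x z := by
  intro x y z hxy h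
  unfold Pt.R0 at h
  split at h <;> cases x <;> simp_all [RT] <;> omega

lemma r0cs : ∀ i j, Pt.R0 (.chain i (j+1)) (.chain i j) := by
  intro i j
  match i with
  | 0 => exact ⟨rfl, rfl⟩
  | 1 => exact ⟨rfl, rfl⟩
  | 2 => exact ⟨rfl, rfl⟩
  | (n+3) => exact ⟨rfl, rfl⟩

open Relation in
lemma RT_sub_TG : ∀ x y, RT x y → Relation.TransGen Pt.R0 x y := by
  have s : ∀ x y, Pt.R0 x y → TransGen Pt.R0 x y := fun x y h => TransGen.single h
  have taa : TransGen Pt.R0 .a .a := s _ _ trivial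
  have tga : TransGen Pt.R0 .g .a := s _ _ trivial
  have tgb : TransGen Pt.R0 .g .b := s _ _ trivial
  have tdb : TransGen Pt.R0 .d .b := s _ _ trivial
  have tg1g : TransGen Pt.R0 .g1 .g := s _ _ trivial
  have tg1a := tg1g.trans tga
  have tg1b := tg1g.trans tgb
  have td1d : TransGen Pt.R0 .d1 .d := s _ _ trivial
  have td1b := td1d.trans tdb
  have tg2g1 : TransGen Pt.R0 .g2 .g1 := s _ _ trivial
  have tg2g := tg2g1.trans tg1g
  have tg2a := tg2g.trans tga
  have tg2b := tg2g.trans tgb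
  have td2d1 : TransGen Pt.R0 .d2 .d1 := s _ _ trivial
  have td2d := td2d1.trans td1d
  have td2b := td2d.trans tdb
  -- chain descent
  have cdesc : ∀ i j j', j' < j → TransGen Pt.R0 (.chain i j) (.chain i j') := by
    intro i j
    induction j with
    | zero => omega
    | succ j ih =>
      intro j' hj
      rcases Nat.lt_or_ge j' j with h | h
      · exact (TransGen.single (r0cs i j)).trans (ih j' h)
      · have : j' = j := by omega
        subst this
        exact TransGen.single (r0cs i j')
  have c0g : ∀ j, TransGen Pt.R0 (.chain 0 j) .g := by
    intro j
    rcases Nat.eq_zero_or_pos j with h | h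
    · subst h; exact s _ _ trivial
    · exact (cdesc 0 j 0 h).trans (s _ _ trivial)
  have c0d : ∀ j, TransGen Pt.R0 (.chain 0 j) .d := by
    intro j
    rcases Nat.eq_zero_or_pos j with h | h
    · subst h; exact s _ _ trivial
    · exact (cdesc 0 j 0 h).trans (s _ _ trivial)
  have c1g1 : ∀ j, TransGen Pt.R0 (.chain 1 j) .g1 := by
    intro j
    rcases Nat.eq_zero_or_pos j with h | h
    · subst h; exact s _ _ trivial
    · exact (cdesc 1 j 0 h).trans (s _ _ trivial)
  have c1d1 : ∀ j, TransGen Pt.R0 (.chain 1 j) .d1 := by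
    intro j
    rcases Nat.eq_zero_or_pos j with h | h
    · subst h; exact s _ _ trivial
    · exact (cdesc 1 j 0 h).trans (s _ _ trivial)
  have c2g2 : ∀ j, TransGen Pt.R0 (.chain 2 j) .g2 := by
    intro j
    rcases Nat.eq_zero_or_pos j with h | h
    · subst h; exact s _ _ trivial
    · exact (cdesc 2 j 0 h).trans (s _ _ trivial)
  have c2d2 : ∀ j, TransGen Pt.R0 (.chain 2 j) .d2 := by
    intro j
    rcases Nat.eq_zero_or_pos j with h | h
    · subst h; exact s _ _ trivial
    · exact (cdesc 2 j 0 h).trans (s _ _ trivial)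
  have e0 : ∀ t k l j, j ≤ t → TransGen Pt.R0 (.e t k l) (.chain 0 j) := by
    intro t k l j hj
    have h0 : TransGen Pt.R0 (.e t k l) (.chain 0 t) := s _ _ rfl
    rcases Nat.lt_or_ge j t with h | h
    · exact h0.trans (cdesc 0 t j h)
    · have : j = t := by omega
      subst this; exact h0
  have e1 : ∀ t k l j, j ≤ k → TransGen Pt.R0 (.e t k l) (.chain 1 j) := by
    intro t k l j hj
    have h0 : TransGen Pt.R0 (.e t k l) (.chain 1 k) := s _ _ rfl
    rcases Nat.lt_or_ge j k with h | h
    · exact h0.trans (cdesc 1 k j h)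
    · have : j = k := by omega
      subst this; exact h0
  have e2 : ∀ t k l j, j ≤ l → TransGen Pt.R0 (.e t k l) (.chain 2 j) := by
    intro t k l j hj
    have h0 : TransGen Pt.R0 (.e t k l) (.chain 2 l) := s _ _ rfl
    rcases Nat.lt_or_ge j l with h | h
    · exact h0.trans (cdesc 2 l j h)
    · have : j = l := by omega
      subst this; exact h0
  intro x y hxy
  cases x with
  | a => simp [RT] at hxy; subst hxy; exact taa
  | b => simp [RT] at hxy
  | g => rcases hxy with h | h <;> subst h <;> assumption
  | d => simp [RT] at hxy; subst hxy; exact tdb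
  | g1 => rcases hxy with h | h | h <;> subst h <;> assumption
  | d1 => rcases hxy with h | h <;> subst h <;> assumption
  | g2 => rcases hxy with h | h | h | h <;> subst h <;> assumption
  | d2 => rcases hxy with h | h | h <;> subst h <;> assumption
  | chain i j =>
    rcases hxy with ⟨j', hj, rfl⟩ | ⟨rfl, h⟩ | ⟨rfl, h⟩ | ⟨rfl, h⟩
    · exact cdesc i j j' hj
    · rcases h with h | h | h | h <;> subst h
      · exact c0g j
      · exact c0d j
      · exact (c0g j).trans tga
      · exact (c0g j).trans tgb
    · rcases h with h | h | h | h | h | h <;> subst h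
      · exact c1g1 j
      · exact c1d1 j
      · exact (c1g1 j).trans tg1g
      · exact (c1d1 j).trans td1d
      · exact (c1g1 j).trans tg1a
      · exact (c1g1 j).trans tg1b
    · rcases h with h | h | h | h | h | h | h | h <;> subst h
      · exact c2g2 j
      · exact c2d2 j
      · exact (c2g2 j).trans tg2g1
      · exact (c2d2 j).trans td2d1
      · exact (c2g2 j).trans tg2g
      · exact (c2d2 j).trans td2d
      · exact (c2g2 j).trans tg2a
      · exact (c2g2 j).trans tg2b
  | e t k l =>
    rcases hxy with ⟨j, hj, rfl⟩ | ⟨j, hj, rfl⟩ | ⟨j, hj, rfl⟩ | h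
    · exact e0 t k l j hj
    · exact e1 t k l j hj
    · exact e2 t k l j hj
    · have h1 := e1 t k l 0 (Nat.zero_le _)
      have h2 := e2 t k l 0 (Nat.zero_le _)
      have h0 := e0 t k l 0 (Nat.zero_le _)
      rcases h with h | h | h | h | h | h | h | h <;> subst h
      · exact h0.trans (c0g 0)
      · exact h0.trans (c0d 0)
      · exact h1.trans (c1g1 0)
      · exact h1.trans (c1d1 0)
      · exact h2.trans (c2g2 0)
      · exact h2.trans (c2d2 0)
      · exact (h0.trans (c0g 0)).trans tga
      · exact (h0.trans (c0g 0)).trans tgb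

lemma TG_iff_RT : ∀ x y, Relation.TransGen Pt.R0 x y ↔ RT x y := by
  intro x y
  constructor
  · intro h
    induction h with
    | single h => exact R0_sub_RT _ _ h
    | tail _ h ih => exact RT_R0_trans _ _ _ ih h
  · exact RT_sub_TG x y

lemma RT_chain_iff {i2 j2 i j : Nat} (h : i ≤ 2) :
    RT (.chain i2 j2) (.chain i j) ↔ (i2 = i ∧ j < j2) := by
  constructor
  · intro hr
    rcases hr with ⟨j', hj', he⟩ | ⟨_, h0⟩ | ⟨_, h0⟩ | ⟨_, h0⟩
    · obtain ⟨h1, h2⟩ := Pt.chain.inj he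
      exact ⟨h1.symm, by omega⟩
    all_goals rcases h0 with h0 | h0 | h0 | h0 <;> first | (simp at h0) | (rcases h0 with h0 | h0 | h0 | h0 <;> simp at h0)
  · rintro ⟨rfl, hlt⟩
    exact Or.inl ⟨j, hlt, rfl⟩

lemma RT_e_chain_iff {t k l i j : Nat} :
    RT (.e t k l) (.chain i j) ↔ ((i = 0 ∧ j ≤ t) ∨ (i = 1 ∧ j ≤ k) ∨ (i = 2 ∧ j ≤ l)) := by
  constructor
  · intro hr
    rcases hr with ⟨j', hj', he⟩ | ⟨j', hj', he⟩ | ⟨j', hj', he⟩ | h0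
    · obtain ⟨h1, h2⟩ := Pt.chain.inj he
      exact Or.inl ⟨h1, by omega⟩
    · obtain ⟨h1, h2⟩ := Pt.chain.inj he
      exact Or.inr (Or.inl ⟨h1, by omega⟩)
    · obtain ⟨h1, h2⟩ := Pt.chain.inj he
      exact Or.inr (Or.inr ⟨h1, by omega⟩)
    · rcases h0 with h0 | h0 | h0 | h0 | h0 | h0 | h0 | h0 <;> simp at h0
  · rintro (⟨rfl, hle⟩ | ⟨rfl, hle⟩ | ⟨rfl, hle⟩)
    · exact Or.inl ⟨j, hle, rfl⟩
    · exact Or.inr (Or.inl ⟨j, hle, rfl⟩)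
    · exact Or.inr (Or.inr (Or.inl ⟨j, hle, rfl⟩))

section Model
variable {P : List Instr} {c₀ : Config}

@[reducible] def pt (p : Pt) (h : Pt.Ok P c₀ p := by simp [Pt.Ok]) : FW P c₀ := ⟨p, h⟩

lemma FR_iff (x y : FW P c₀) : FR P c₀ x y ↔ RT x.1 y.1 := TG_iff_RT _ _

variable (V : Nat → FW P c₀ → Prop)

lemma sat_and {x : FW P c₀} {φ ψ} :
    satU (FR P c₀) V x (.and φ ψ) ↔ satU (FR P c₀) V x φ ∧ satU (FR P c₀) V x ψ := Iff.rfl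

lemma sat_neg {x : FW P c₀} {φ} :
    satU (FR P c₀) V x (.neg φ) ↔ ¬ satU (FR P c₀) V x φ := Iff.rfl

lemma sat_dia {x : FW P c₀} {φ} :
    satU (FR P c₀) V x (MFU.dia φ) ↔ ∃ y, RT x.1 y.1 ∧ satU (FR P c₀) V y φ := by
  simp only [MFU.dia, satU]
  push_neg
  exact exists_congr fun y => and_congr_left' (FR_iff x y)

lemma sat_box {x : FW P c₀} {φ} :
    satU (FR P c₀) V x (MFU.box φ) ↔ ∀ y : FW P c₀, RT x.1 y.1 → satU (FR P c₀) V y φ := by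
  simp only [satU]
  constructor
  · intro h y hy; exact h y ((FR_iff x y).2 hy)
  · intro h y hy; exact h y ((FR_iff x y).1 hy)

lemma sat_ndia {x : FW P c₀} {φ} :
    satU (FR P c₀) V x (.neg (MFU.dia φ)) ↔ ∀ y : FW P c₀, RT x.1 y.1 → ¬ satU (FR P c₀) V y φ := by
  rw [sat_neg, sat_dia]; push_neg; rfl

lemma sat_top {x : FW P c₀} : satU (FR P c₀) V x MFU.top := by
  simp [MFU.top, satU]

lemma sat_or {x : FW P c₀} {φ ψ} :
    satU (FR P c₀) V x (MFU.or φ ψ) ↔ satU (FR P c₀) V x φ ∨ satU (FR P c₀) V x ψ := by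
  simp only [MFU.or, satU]; tauto

lemma sat_imp {x : FW P c₀} {φ ψ} :
    satU (FR P c₀) V x (MFU.imp φ ψ) ↔ (satU (FR P c₀) V x φ → satU (FR P c₀) V x ψ) := by
  simp only [MFU.imp, MFU.or, satU]; tauto

lemma sat_uEx {x : FW P c₀} {φ} :
    satU (FR P c₀) V x (MFU.uEx φ) ↔ ∃ y, satU (FR P c₀) V y φ := by
  simp only [MFU.uEx, satU]
  constructor
  · intro h
    rcases not_forall.1 h with ⟨y, hy⟩
    exact ⟨y, not_not.1 hy⟩
  · rintro ⟨y, hy⟩ h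
    exact h y hy

end Model

section Char
variable {P : List Instr} {c₀ : Config}

def wa : FW P c₀ := ⟨.a, trivial⟩
def wb : FW P c₀ := ⟨.b, trivial⟩
def wg : FW P c₀ := ⟨.g, trivial⟩
def wd : FW P c₀ := ⟨.d, trivial⟩
def wg1 : FW P c₀ := ⟨.g1, trivial⟩
def wd1 : FW P c₀ := ⟨.d1, trivial⟩
def wg2 : FW P c₀ := ⟨.g2, trivial⟩
def wd2 : FW P c₀ := ⟨.d2, trivial⟩
def wc (i j : Nat) (h : i ≤ 2) : FW P c₀ := ⟨.chain i j, h⟩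

variable (V : Nat → FW P c₀ → Prop)

lemma sat_fα (x : FW P c₀) : satU (FR P c₀) V x .fα ↔ x.1 = .a := by
  obtain ⟨p, hp⟩ := x
  show satU (FR P c₀) V (pt p hp) (.and (MFU.dia MFU.top) (MFU.box (MFU.dia MFU.top))) ↔ _
  simp only [sat_and, sat_dia, sat_box]
  constructor
  · rintro ⟨⟨q, hRq, -⟩, h2⟩
    have key : RT p .b → False := by
      intro hpb
      rcases h2 wb hpb with ⟨⟨z, hz⟩, hRz, -⟩
      simp [wb, RT] at hRz
    cases p
    case a => rfl
    case b => obtain ⟨q, hq⟩ := q; simp [RT] at hRq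
    case g => exact (key (by simp [wb, RT])).elim
    case d => exact (key (by simp [wb, RT])).elim
    case g1 => exact (key (by simp [wb, RT])).elim
    case d1 => exact (key (by simp [wb, RT])).elim
    case g2 => exact (key (by simp [wb, RT])).elim
    case d2 => exact (key (by simp [wb, RT])).elim
    case chain i j =>
      have hi : i ≤ 2 := hp
      exact (key (by simp [wb, RT]; omega)).elim
    case e t k l => exact (key (by simp [wb, RT])).elim
  · rintro rfl
    refine ⟨⟨wa, rfl, sat_top V⟩, ?_⟩
    intro q hRq
    obtain ⟨q, hq⟩ := q
    simp [RT] at hRq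
    subst hRq
    exact ⟨wa, rfl, sat_top V⟩

lemma sat_fβ (x : FW P c₀) : satU (FR P c₀) V x .fβ ↔ x.1 = .b := by
  obtain ⟨p, hp⟩ := x
  show satU (FR P c₀) V (pt p hp) (MFU.box .bot) ↔ _
  simp only [sat_box]
  constructor
  · intro h
    have key : ∀ y : FW P c₀, RT p y.1 → False := fun y hy => h y hy
    cases p
    case b => rfl
    case a => exact (key wa rfl).elim
    case g => exact (key wb (by simp [wb, RT])).elim
    case d => exact (key wb (by simp [wb, RT])).elim
    case g1 => exact (key wb (by simp [wb, RT])).elim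
    case d1 => exact (key wb (by simp [wb, RT])).elim
    case g2 => exact (key wb (by simp [wb, RT])).elim
    case d2 => exact (key wb (by simp [wb, RT])).elim
    case chain i j =>
      have hi : i ≤ 2 := hp
      exact (key wb (by simp [wb, RT]; omega)).elim
    case e t k l => exact (key wb (by simp [wb, RT])).elim
  · rintro rfl q hRq
    obtain ⟨q, hq⟩ := q
    simp [RT] at hRq
end Char

section Char2
variable {P : List Instr} {c₀ : Config} (V : Nat → FW P c₀ → Prop)

lemma sat_fγ (x : FW P c₀) : satU (FR P c₀) V x .fγ ↔ x.1 = .g := by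
  obtain ⟨p, hp⟩ := x
  show satU (FR P c₀) V (pt p hp)
    (.and (MFU.dia .fα) (.and (MFU.dia .fβ) (.neg (MFU.dia (MFU.dia .fβ))))) ↔ _
  simp only [sat_and, sat_dia, sat_neg, sat_fα, sat_fβ]
  constructor
  · rintro ⟨⟨y, hRy, hya⟩, ⟨z, hRz, hzb⟩, h3⟩
    obtain ⟨y, hy⟩ := y; obtain ⟨z, hz⟩ := z
    simp only at hya hzb
    subst hya; subst hzb
    have key : ∀ q : Pt, (hq : Pt.Ok P c₀ q) → RT p q → RT q .b → False := by
      intro q hq hpq hqb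
      exact h3 ⟨⟨q, hq⟩, hpq, wb, hqb, rfl⟩
    cases p
    case a => simp [RT] at hRz
    case b => simp [RT] at hRy
    case g => rfl
    case d => simp [RT] at hRy
    case g1 => exact (key .g trivial (by simp [RT]) (by simp [RT])).elim
    case d1 => simp [RT] at hRy
    case g2 => exact (key .g trivial (by simp [RT]) (by simp [RT])).elim
    case d2 => simp [RT] at hRy
    case chain i j =>
      have hi : i ≤ 2 := hp
      exact (key .g trivial (by simp [RT]; omega) (by simp [RT])).elim
    case e t k l => exact (key .g trivial (by simp [RT]) (by simp [RT])).elim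
  · rintro rfl
    refine ⟨⟨wa, by simp [wa, RT], rfl⟩, ⟨wb, by simp [wb, RT], rfl⟩, ?_⟩
    rintro ⟨⟨y, hy⟩, hRy, ⟨z, hz⟩, hRz, hzb⟩
    simp only at hzb; subst hzb
    simp [RT] at hRy
    rcases hRy with rfl | rfl <;> simp [RT] at hRz

lemma sat_fδ (x : FW P c₀) : satU (FR P c₀) V x .fδ ↔ x.1 = .d := by
  obtain ⟨p, hp⟩ := x
  show satU (FR P c₀) V (pt p hp)
    (.and (.neg .fγ) (.and (MFU.dia .fβ) (.neg (MFU.dia (MFU.dia .fβ))))) ↔ _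
  simp only [sat_and, sat_dia, sat_neg, sat_fγ, sat_fβ]
  constructor
  · rintro ⟨h1, ⟨z, hRz, hzb⟩, h3⟩
    obtain ⟨z, hz⟩ := z
    simp only at hzb; subst hzb
    have key : ∀ q : Pt, (hq : Pt.Ok P c₀ q) → RT p q → RT q .b → False := by
      intro q hq hpq hqb
      exact h3 ⟨⟨q, hq⟩, hpq, wb, hqb, rfl⟩
    cases p
    case a => simp [RT] at hRz
    case b => simp [RT] at hRz
    case g => simp at h1
    case d => rfl
    case g1 => exact (key .g trivial (by simp [RT]) (by simp [RT])).elim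
    case d1 => exact (key .d trivial (by simp [RT]) (by simp [RT])).elim
    case g2 => exact (key .g trivial (by simp [RT]) (by simp [RT])).elim
    case d2 => exact (key .d trivial (by simp [RT]) (by simp [RT])).elim
    case chain i j =>
      have hi : i ≤ 2 := hp
      exact (key .g trivial (by simp [RT]; omega) (by simp [RT])).elim
    case e t k l => exact (key .g trivial (by simp [RT]) (by simp [RT])).elim
  · rintro rfl
    refine ⟨by simp, ⟨wb, by simp [wb, RT], rfl⟩, ?_⟩
    rintro ⟨⟨y, hy⟩, hRy, ⟨z, hz⟩, hRz, hzb⟩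
    simp only at hzb; subst hzb
    simp [RT] at hRy
    subst hRy
    simp [RT] at hRz

end Char2

section Char3
variable {P : List Instr} {c₀ : Config} (V : Nat → FW P c₀ → Prop)

lemma sat_fγ₁ (x : FW P c₀) : satU (FR P c₀) V x .fγ₁ ↔ x.1 = .g1 := by
  obtain ⟨p, hp⟩ := x
  show satU (FR P c₀) V (pt p hp)
    (.and (MFU.dia .fγ) (.and (.neg (MFU.dia (MFU.dia .fγ))) (.neg (MFU.dia .fδ)))) ↔ _
  simp only [sat_and, sat_dia, sat_neg, sat_fγ, sat_fδ]
  constructor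
  · rintro ⟨⟨y, hRy, hyg⟩, h2, h3⟩
    obtain ⟨y, hy⟩ := y
    simp only at hyg; subst hyg
    cases p
    case a => simp [RT] at hRy
    case b => simp [RT] at hRy
    case g => simp [RT] at hRy
    case d => simp [RT] at hRy
    case g1 => rfl
    case d1 => simp [RT] at hRy
    case d2 => simp [RT] at hRy
    case g2 => exact (h2 ⟨wg1, by simp [wg1, RT], wg, by simp [wg1, wg, RT], rfl⟩).elim
    case chain i j =>
      have hi : i ≤ 2 := hp
      exact (h3 ⟨wd, by simp [wd, RT]; omega, rfl⟩).elim
    case e t k l => exact (h3 ⟨wd, by simp [wd, RT], rfl⟩).elim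
  · rintro rfl
    refine ⟨⟨wg, by simp [wg, RT], rfl⟩, ?_, ?_⟩
    · rintro ⟨⟨y, hy⟩, hRy, ⟨z, hz⟩, hRz, hzg⟩
      simp only at hzg; subst hzg
      simp [RT] at hRy
      rcases hRy with rfl | rfl | rfl <;> simp [RT] at hRz
    · rintro ⟨⟨y, hy⟩, hRy, hyd⟩
      simp only at hyd; subst hyd
      simp [RT] at hRy

lemma sat_fδ₁ (x : FW P c₀) :
    satU (FR P c₀) V x .fδ₁ ↔ (x.1 = .d1 ∨ x.1 = .chain 0 0) := by
  obtain ⟨p, hp⟩ := x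
  show satU (FR P c₀) V (pt p hp) (.and (MFU.dia .fδ) (.neg (MFU.dia (MFU.dia .fδ)))) ↔ _
  simp only [sat_and, sat_dia, sat_neg, sat_fδ]
  constructor
  · rintro ⟨⟨y, hRy, hyd⟩, h2⟩
    obtain ⟨y, hy⟩ := y
    simp only at hyd; subst hyd
    cases p
    case a => simp [RT] at hRy
    case b => simp [RT] at hRy
    case g => simp [RT] at hRy
    case d => simp [RT] at hRy
    case g1 => simp [RT] at hRy
    case g2 => simp [RT] at hRy
    case d1 => exact Or.inl rfl
    case d2 => exact (h2 ⟨wd1, by simp [wd1, RT], wd, by simp [wd1, wd, RT], rfl⟩).elim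
    case chain i j =>
      have hi : i ≤ 2 := hp
      interval_cases i
      · cases j with
        | zero => exact Or.inr rfl
        | succ j' =>
          exact (h2 ⟨wc 0 0 (by omega), by simp [wc, RT], wd,
            by simp [wc, wd, RT], rfl⟩).elim
      · exact (h2 ⟨wd1, by simp [wd1, RT], wd, by simp [wd1, wd, RT], rfl⟩).elim
      · exact (h2 ⟨wd1, by simp [wd1, RT], wd, by simp [wd1, wd, RT], rfl⟩).elim
    case e t k l =>
      exact (h2 ⟨wc 0 0 (by omega), by simp [wc, RT], wd, by simp [wc, wd, RT], rfl⟩).elim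
  · rintro (rfl | rfl)
    · refine ⟨⟨wd, by simp [wd, RT], rfl⟩, ?_⟩
      rintro ⟨⟨y, hy⟩, hRy, ⟨z, hz⟩, hRz, hzd⟩
      simp only at hzd; subst hzd
      simp [RT] at hRy
      rcases hRy with rfl | rfl <;> simp [RT] at hRz
    · refine ⟨⟨wd, by simp [wd, RT], rfl⟩, ?_⟩
      rintro ⟨⟨y, hy⟩, hRy, ⟨z, hz⟩, hRz, hzd⟩
      simp only at hzd; subst hzd
      simp [RT] at hRy
      rcases hRy with rfl | rfl | rfl | rfl <;> simp [RT] at hRz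

lemma sat_fγ₂ (x : FW P c₀) : satU (FR P c₀) V x .fγ₂ ↔ x.1 = .g2 := by
  obtain ⟨p, hp⟩ := x
  show satU (FR P c₀) V (pt p hp)
    (.and (MFU.dia .fγ₁) (.and (.neg (MFU.dia (MFU.dia .fγ₁))) (.neg (MFU.dia .fδ)))) ↔ _
  simp only [sat_and, sat_dia, sat_neg, sat_fγ₁, sat_fδ]
  constructor
  · rintro ⟨⟨y, hRy, hyg⟩, h2, h3⟩
    obtain ⟨y, hy⟩ := y
    simp only at hyg; subst hyg
    cases p
    case a => simp [RT] at hRy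
    case b => simp [RT] at hRy
    case g => simp [RT] at hRy
    case d => simp [RT] at hRy
    case g1 => simp [RT] at hRy
    case d1 => simp [RT] at hRy
    case d2 => simp [RT] at hRy
    case g2 => rfl
    case chain i j =>
      have hi : i ≤ 2 := hp
      interval_cases i
      · simp [RT] at hRy
      · exact (h3 ⟨wd, by simp [wd, RT], rfl⟩).elim
      · exact (h3 ⟨wd, by simp [wd, RT], rfl⟩).elim
    case e t k l => exact (h3 ⟨wd, by simp [wd, RT], rfl⟩).elim
  · rintro rfl
    refine ⟨⟨wg1, by simp [wg1, RT], rfl⟩, ?_, ?_⟩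
    · rintro ⟨⟨y, hy⟩, hRy, ⟨z, hz⟩, hRz, hzg⟩
      simp only at hzg; subst hzg
      simp [RT] at hRy
      rcases hRy with rfl | rfl | rfl | rfl <;> simp [RT] at hRz
    · rintro ⟨⟨y, hy⟩, hRy, hyd⟩
      simp only at hyd; subst hyd
      simp [RT] at hRy

lemma sat_fδ₂ (x : FW P c₀) :
    satU (FR P c₀) V x .fδ₂ ↔ (x.1 = .d2 ∨ x.1 = .chain 1 0 ∨ x.1 = .chain 0 1) := by
  obtain ⟨p, hp⟩ := x
  show satU (FR P c₀) V (pt p hp) (.and (MFU.dia .fδ₁) (.neg (MFU.dia (MFU.dia .fδ₁)))) ↔ _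
  simp only [sat_and, sat_dia, sat_neg, sat_fδ₁]
  constructor
  · rintro ⟨⟨y, hRy, hyd⟩, h2⟩
    obtain ⟨y, hy⟩ := y
    simp only at hyd
    rcases hyd with rfl | rfl
    · cases p
      case a => simp [RT] at hRy
      case b => simp [RT] at hRy
      case g => simp [RT] at hRy
      case d => simp [RT] at hRy
      case g1 => simp [RT] at hRy
      case g2 => simp [RT] at hRy
      case d1 => simp [RT] at hRy
      case d2 => exact Or.inl rfl
      case chain i j =>
        have hi : i ≤ 2 := hp
        interval_cases i
        · simp [RT] at hRy
        · cases j with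
          | zero => exact Or.inr (Or.inl rfl)
          | succ j' =>
            exact (h2 ⟨wc 1 0 (by omega), by simp [wc, RT], wd1,
              by simp [wc, wd1, RT], Or.inl rfl⟩).elim
        · exact (h2 ⟨wd2, by simp [wd2, RT], wd1, by simp [wd2, wd1, RT], Or.inl rfl⟩).elim
      case e t k l =>
        exact (h2 ⟨wc 1 0 (by omega), by simp [wc, RT], wd1,
          by simp [wc, wd1, RT], Or.inl rfl⟩).elim
    · cases p
      case a => simp [RT] at hRy
      case b => simp [RT] at hRy
      case g => simp [RT] at hRy
      case d => simp [RT] at hRy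
      case g1 => simp [RT] at hRy
      case g2 => simp [RT] at hRy
      case d1 => simp [RT] at hRy
      case d2 => simp [RT] at hRy
      case chain i j =>
        simp [RT] at hRy
        obtain ⟨j', hj', rfl, rfl⟩ := hRy
        cases j with
        | zero => omega
        | succ j2 =>
          cases j2 with
          | zero => exact Or.inr (Or.inr rfl)
          | succ j3 =>
            exact (h2 ⟨wc 0 1 (by omega), by simp [wc, RT], wc 0 0 (by omega),
              by simp [wc, RT], Or.inr rfl⟩).elim
      case e t k l =>
        exact (h2 ⟨wc 1 0 (by omega), by simp [wc, RT], wd1,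
          by simp [wc, wd1, RT], Or.inl rfl⟩).elim
  · rintro (rfl | rfl | rfl)
    · refine ⟨⟨wd1, by simp [wd1, RT], Or.inl rfl⟩, ?_⟩
      rintro ⟨⟨y, hy⟩, hRy, ⟨z, hz⟩, hRz, hzd⟩
      simp only at hzd
      simp [RT] at hRy
      rcases hRy with rfl | rfl | rfl <;> rcases hzd with rfl | rfl <;> simp [RT] at hRz
    · refine ⟨⟨wd1, by simp [wd1, RT], Or.inl rfl⟩, ?_⟩
      rintro ⟨⟨y, hy⟩, hRy, ⟨z, hz⟩, hRz, hzd⟩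
      simp only at hzd
      simp [RT] at hRy
      rcases hRy with rfl | rfl | rfl | rfl | rfl | rfl <;> rcases hzd with rfl | rfl <;>
        simp [RT] at hRz
    · refine ⟨⟨wc 0 0 (by omega), by simp [wc, RT], Or.inr rfl⟩, ?_⟩
      rintro ⟨⟨y, hy⟩, hRy, ⟨z, hz⟩, hRz, hzd⟩
      simp only at hzd
      simp [RT] at hRy
      rcases hRy with rfl | rfl | rfl | rfl | rfl <;> rcases hzd with rfl | rfl <;>
        simp [RT] at hRz

end Char3

section Char4
variable {P : List Instr} {c₀ : Config} (V : Nat → FW P c₀ → Prop)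

lemma sat_α₀0 (x : FW P c₀) : satU (FR P c₀) V x (.α₀ 0) ↔ x.1 = .chain 0 0 := by
  obtain ⟨p, hp⟩ := x
  show satU (FR P c₀) V (pt p hp) (.and (MFU.dia .fγ) (.and (MFU.dia .fδ)
    (.and (.neg (MFU.dia (MFU.dia .fγ))) (.neg (MFU.dia (MFU.dia .fδ)))))) ↔ _
  simp only [sat_and, sat_dia, sat_neg, sat_fγ, sat_fδ]
  constructor
  · rintro ⟨⟨y, hRy, hyg⟩, ⟨z, hRz, hzd⟩, h3, h4⟩
    obtain ⟨y, hy⟩ := y; obtain ⟨z, hz⟩ := z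
    simp only at hyg hzd; subst hyg; subst hzd
    cases p
    case a => simp [RT] at hRy
    case b => simp [RT] at hRy
    case g => simp [RT] at hRy
    case d => simp [RT] at hRy
    case g1 => simp [RT] at hRz
    case g2 => simp [RT] at hRz
    case d1 => simp [RT] at hRy
    case d2 => simp [RT] at hRy
    case chain i j =>
      have hi : i ≤ 2 := hp
      interval_cases i
      · cases j with
        | zero => rfl
        | succ j' =>
          exact (h3 ⟨wc 0 0 (by omega), by simp [wc, RT], wg, by simp [wc, wg, RT], rfl⟩).elim
      · exact (h3 ⟨wg1, by simp [wg1, RT], wg, by simp [wg1, wg, RT], rfl⟩).elim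
      · exact (h3 ⟨wg1, by simp [wg1, RT], wg, by simp [wg1, wg, RT], rfl⟩).elim
    case e t k l =>
      exact (h3 ⟨wc 0 0 (by omega), by simp [wc, RT], wg, by simp [wc, wg, RT], rfl⟩).elim
  · rintro rfl
    refine ⟨⟨wg, by simp [wg, RT], rfl⟩, ⟨wd, by simp [wd, RT], rfl⟩, ?_, ?_⟩ <;>
    · rintro ⟨⟨y, hy⟩, hRy, ⟨z, hz⟩, hRz, hze⟩
      simp only at hze; subst hze
      simp [RT] at hRy
      rcases hRy with rfl | rfl | rfl | rfl <;> simp [RT] at hRz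

lemma sat_α₀1 (x : FW P c₀) : satU (FR P c₀) V x (.α₀ 1) ↔ x.1 = .chain 1 0 := by
  obtain ⟨p, hp⟩ := x
  show satU (FR P c₀) V (pt p hp) (.and (MFU.dia .fγ₁) (.and (MFU.dia .fδ₁)
    (.and (.neg (MFU.dia (MFU.dia .fγ₁))) (.neg (MFU.dia (MFU.dia .fδ₁)))))) ↔ _
  simp only [sat_and, sat_dia, sat_neg, sat_fγ₁, sat_fδ₁]
  constructor
  · rintro ⟨⟨y, hRy, hyg⟩, ⟨z, hRz, hzd⟩, h3, h4⟩
    obtain ⟨y, hy⟩ := y; obtain ⟨z, hz⟩ := z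
    simp only at hyg hzd; subst hyg
    cases p
    case a => simp [RT] at hRy
    case b => simp [RT] at hRy
    case g => simp [RT] at hRy
    case d => simp [RT] at hRy
    case g1 => simp [RT] at hRy
    case d1 => simp [RT] at hRy
    case d2 => simp [RT] at hRy
    case g2 => rcases hzd with rfl | rfl <;> simp [RT] at hRz
    case chain i j =>
      have hi : i ≤ 2 := hp
      interval_cases i
      · simp [RT] at hRy
      · cases j with
        | zero => rfl
        | succ j' =>
          exact (h3 ⟨wc 1 0 (by omega), by simp [wc, RT], wg1, by simp [wc, wg1, RT], rfl⟩).elim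
      · exact (h3 ⟨wg2, by simp [wg2, RT], wg1, by simp [wg2, wg1, RT], rfl⟩).elim
    case e t k l =>
      exact (h3 ⟨wc 1 0 (by omega), by simp [wc, RT], wg1, by simp [wc, wg1, RT], rfl⟩).elim
  · rintro rfl
    refine ⟨⟨wg1, by simp [wg1, RT], rfl⟩, ⟨wd1, by simp [wd1, RT], Or.inl rfl⟩, ?_, ?_⟩
    · rintro ⟨⟨y, hy⟩, hRy, ⟨z, hz⟩, hRz, hze⟩
      simp only at hze; subst hze
      simp [RT] at hRy
      rcases hRy with rfl | rfl | rfl | rfl | rfl | rfl <;> simp [RT] at hRz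
    · rintro ⟨⟨y, hy⟩, hRy, ⟨z, hz⟩, hRz, hze⟩
      simp only at hze
      simp [RT] at hRy
      rcases hRy with rfl | rfl | rfl | rfl | rfl | rfl <;> rcases hze with rfl | rfl <;>
        simp [RT] at hRz

lemma sat_α₀2 (x : FW P c₀) : satU (FR P c₀) V x (.α₀ 2) ↔ x.1 = .chain 2 0 := by
  obtain ⟨p, hp⟩ := x
  show satU (FR P c₀) V (pt p hp) (.and (MFU.dia .fγ₂) (.and (MFU.dia .fδ₂)
    (.and (.neg (MFU.dia (MFU.dia .fγ₂))) (.neg (MFU.dia (MFU.dia .fδ₂)))))) ↔ _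
  simp only [sat_and, sat_dia, sat_neg, sat_fγ₂, sat_fδ₂]
  constructor
  · rintro ⟨⟨y, hRy, hyg⟩, ⟨z, hRz, hzd⟩, h3, h4⟩
    obtain ⟨y, hy⟩ := y; obtain ⟨z, hz⟩ := z
    simp only at hyg hzd; subst hyg
    cases p
    case a => simp [RT] at hRy
    case b => simp [RT] at hRy
    case g => simp [RT] at hRy
    case d => simp [RT] at hRy
    case g1 => simp [RT] at hRy
    case d1 => simp [RT] at hRy
    case d2 => simp [RT] at hRy
    case g2 => simp [RT] at hRy
    case chain i j =>
      have hi : i ≤ 2 := hp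
      interval_cases i
      · simp [RT] at hRy
      · simp [RT] at hRy
      · cases j with
        | zero => rfl
        | succ j' =>
          exact (h3 ⟨wc 2 0 (by omega), by simp [wc, RT], wg2, by simp [wc, wg2, RT], rfl⟩).elim
    case e t k l =>
      exact (h3 ⟨wc 2 0 (by omega), by simp [wc, RT], wg2, by simp [wc, wg2, RT], rfl⟩).elim
  · rintro rfl
    refine ⟨⟨wg2, by simp [wg2, RT], rfl⟩, ⟨wd2, by simp [wd2, RT], Or.inl rfl⟩, ?_, ?_⟩
    · rintro ⟨⟨y, hy⟩, hRy, ⟨z, hz⟩, hRz, hze⟩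
      simp only at hze; subst hze
      simp [RT] at hRy
      rcases hRy with rfl | rfl | rfl | rfl | rfl | rfl | rfl | rfl <;> simp [RT] at hRz
    · rintro ⟨⟨y, hy⟩, hRy, ⟨z, hz⟩, hRz, hze⟩
      simp only at hze
      simp [RT] at hRy
      rcases hRy with rfl | rfl | rfl | rfl | rfl | rfl | rfl | rfl <;>
        rcases hze with rfl | rfl | rfl <;> simp [RT] at hRz

end Char4

section Char5
variable {P : List Instr} {c₀ : Config} (V : Nat → FW P c₀ → Prop)

lemma sat_alpha0 : ∀ (j : Nat) (x : FW P c₀),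
    satU (FR P c₀) V x (.alpha 0 j) ↔ x.1 = .chain 0 j := by
  intro j
  induction j with
  | zero => exact fun x => sat_α₀0 V x
  | succ j ih =>
    intro x
    obtain ⟨p, hp⟩ := x
    show satU (FR P c₀) V (pt p hp) (.and (MFU.dia (.α₀ 0)) (.and (MFU.dia (.alpha 0 j))
      (.and (.neg (MFU.dia (MFU.dia (.alpha 0 j))))
        (.and (.neg (MFU.dia (.α₀ 1))) (.and (.neg (MFU.dia (.α₀ 2))) MFU.top))))) ↔ _
    simp only [sat_and, sat_dia, sat_neg, sat_α₀0, sat_α₀1, sat_α₀2, ih]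
    constructor
    · rintro ⟨⟨y, hRy, hy0⟩, ⟨z, hRz, hzj⟩, h3, h4, h5, -⟩
      obtain ⟨z, hz⟩ := z
      simp only at hzj; subst hzj
      cases p
      case a => simp [RT] at hRz
      case b => simp [RT] at hRz
      case g => simp [RT] at hRz
      case d => simp [RT] at hRz
      case g1 => simp [RT] at hRz
      case d1 => simp [RT] at hRz
      case g2 => simp [RT] at hRz
      case d2 => simp [RT] at hRz
      case chain i2 j2 =>
        have hi2 : i2 ≤ 2 := hp
        rw [RT_chain_iff (by omega)] at hRz
        obtain ⟨rfl, hlt⟩ := hRz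
        rcases Nat.lt_or_ge (j+1) j2 with h | h
        · exact (h3 ⟨wc 0 (j+1) (by omega), (RT_chain_iff (by omega)).2 ⟨rfl, by omega⟩,
            wc 0 j (by omega), (RT_chain_iff (by omega)).2 ⟨rfl, by omega⟩, rfl⟩).elim
        · have : j2 = j + 1 := by omega
          simp [this]
      case e t k l =>
        exact (h4 ⟨wc 1 0 (by omega), by simp [wc, RT], rfl⟩).elim
    · rintro rfl
      refine ⟨⟨wc 0 0 (by omega), by simp [wc, RT], rfl⟩,
        ⟨wc 0 j (by omega), by simp [wc, RT], rfl⟩, ?_, ?_, ?_, sat_top V⟩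
      · rintro ⟨⟨y, hy⟩, hRy, ⟨z, hz⟩, hRz, hze⟩
        simp only at hze; subst hze
        simp [RT] at hRy
        rcases hRy with ⟨j', hj', rfl⟩ | rfl | rfl | rfl | rfl <;> simp [RT] at hRz
        omega
      · rintro ⟨⟨y, hy⟩, hRy, hy1⟩
        simp only at hy1; subst hy1
        simp [RT] at hRy
      · rintro ⟨⟨y, hy⟩, hRy, hy2⟩
        simp only at hy2; subst hy2
        simp [RT] at hRy

lemma sat_alpha1 : ∀ (j : Nat) (x : FW P c₀),
    satU (FR P c₀) V x (.alpha 1 j) ↔ x.1 = .chain 1 j := by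
  intro j
  induction j with
  | zero => exact fun x => sat_α₀1 V x
  | succ j ih =>
    intro x
    obtain ⟨p, hp⟩ := x
    show satU (FR P c₀) V (pt p hp) (.and (MFU.dia (.α₀ 1)) (.and (MFU.dia (.alpha 1 j))
      (.and (.neg (MFU.dia (MFU.dia (.alpha 1 j))))
        (.and (.neg (MFU.dia (.α₀ 0))) (.and (.neg (MFU.dia (.α₀ 2))) MFU.top))))) ↔ _
    simp only [sat_and, sat_dia, sat_neg, sat_α₀0, sat_α₀1, sat_α₀2, ih]
    constructor
    · rintro ⟨⟨y, hRy, hy0⟩, ⟨z, hRz, hzj⟩, h3, h4, h5, -⟩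
      obtain ⟨z, hz⟩ := z
      simp only at hzj; subst hzj
      cases p
      case a => simp [RT] at hRz
      case b => simp [RT] at hRz
      case g => simp [RT] at hRz
      case d => simp [RT] at hRz
      case g1 => simp [RT] at hRz
      case d1 => simp [RT] at hRz
      case g2 => simp [RT] at hRz
      case d2 => simp [RT] at hRz
      case chain i2 j2 =>
        have hi2 : i2 ≤ 2 := hp
        rw [RT_chain_iff (by omega)] at hRz
        obtain ⟨rfl, hlt⟩ := hRz
        rcases Nat.lt_or_ge (j+1) j2 with h | h
        · exact (h3 ⟨wc 1 (j+1) (by omega), (RT_chain_iff (by omega)).2 ⟨rfl, by omega⟩,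
            wc 1 j (by omega), (RT_chain_iff (by omega)).2 ⟨rfl, by omega⟩, rfl⟩).elim
        · have : j2 = j + 1 := by omega
          simp [this]
      case e t k l =>
        exact (h4 ⟨wc 0 0 (by omega), by simp [wc, RT], rfl⟩).elim
    · rintro rfl
      refine ⟨⟨wc 1 0 (by omega), by simp [wc, RT], rfl⟩,
        ⟨wc 1 j (by omega), by simp [wc, RT], rfl⟩, ?_, ?_, ?_, sat_top V⟩
      · rintro ⟨⟨y, hy⟩, hRy, ⟨z, hz⟩, hRz, hze⟩
        simp only at hze; subst hze
        simp [RT] at hRy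
        rcases hRy with ⟨j', hj', rfl⟩ | rfl | rfl | rfl | rfl | rfl | rfl <;> simp [RT] at hRz
        omega
      · rintro ⟨⟨y, hy⟩, hRy, hy1⟩
        simp only at hy1; subst hy1
        simp [RT] at hRy
      · rintro ⟨⟨y, hy⟩, hRy, hy2⟩
        simp only at hy2; subst hy2
        simp [RT] at hRy

lemma sat_alpha2 : ∀ (j : Nat) (x : FW P c₀),
    satU (FR P c₀) V x (.alpha 2 j) ↔ x.1 = .chain 2 j := by
  intro j
  induction j with
  | zero => exact fun x => sat_α₀2 V x
  | succ j ih =>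
    intro x
    obtain ⟨p, hp⟩ := x
    show satU (FR P c₀) V (pt p hp) (.and (MFU.dia (.α₀ 2)) (.and (MFU.dia (.alpha 2 j))
      (.and (.neg (MFU.dia (MFU.dia (.alpha 2 j))))
        (.and (.neg (MFU.dia (.α₀ 0))) (.and (.neg (MFU.dia (.α₀ 1))) MFU.top))))) ↔ _
    simp only [sat_and, sat_dia, sat_neg, sat_α₀0, sat_α₀1, sat_α₀2, ih]
    constructor
    · rintro ⟨⟨y, hRy, hy0⟩, ⟨z, hRz, hzj⟩, h3, h4, h5, -⟩
      obtain ⟨z, hz⟩ := z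
      simp only at hzj; subst hzj
      cases p
      case a => simp [RT] at hRz
      case b => simp [RT] at hRz
      case g => simp [RT] at hRz
      case d => simp [RT] at hRz
      case g1 => simp [RT] at hRz
      case d1 => simp [RT] at hRz
      case g2 => simp [RT] at hRz
      case d2 => simp [RT] at hRz
      case chain i2 j2 =>
        have hi2 : i2 ≤ 2 := hp
        rw [RT_chain_iff (by omega)] at hRz
        obtain ⟨rfl, hlt⟩ := hRz
        rcases Nat.lt_or_ge (j+1) j2 with h | h
        · exact (h3 ⟨wc 2 (j+1) (by omega), (RT_chain_iff (by omega)).2 ⟨rfl, by omega⟩,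
            wc 2 j (by omega), (RT_chain_iff (by omega)).2 ⟨rfl, by omega⟩, rfl⟩).elim
        · have : j2 = j + 1 := by omega
          simp [this]
      case e t k l =>
        exact (h4 ⟨wc 0 0 (by omega), by simp [wc, RT], rfl⟩).elim
    · rintro rfl
      refine ⟨⟨wc 2 0 (by omega), by simp [wc, RT], rfl⟩,
        ⟨wc 2 j (by omega), by simp [wc, RT], rfl⟩, ?_, ?_, ?_, sat_top V⟩
      · rintro ⟨⟨y, hy⟩, hRy, ⟨z, hz⟩, hRz, hze⟩
        simp only at hze; subst hze
        simp [RT] at hRy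
        rcases hRy with ⟨j', hj', rfl⟩ | rfl | rfl | rfl | rfl | rfl | rfl | rfl | rfl <;>
          simp [RT] at hRz
        omega
      · rintro ⟨⟨y, hy⟩, hRy, hy1⟩
        simp only at hy1; subst hy1
        simp [RT] at hRy
      · rintro ⟨⟨y, hy⟩, hRy, hy2⟩
        simp only at hy2; subst hy2
        simp [RT] at hRy

end Char5

section Eps
variable {P : List Instr} {c₀ : Config}

lemma chain_mono {i j2 k : Nat} {y : Pt} (h : RT (.chain i j2) y) (hle : j2 ≤ k) :
    RT (.chain i k) y := by
  rcases h with ⟨j', hj', rfl⟩ | h | h | h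
  · exact Or.inl ⟨j', by omega, rfl⟩
  · exact Or.inr (Or.inl h)
  · exact Or.inr (Or.inr (Or.inl h))
  · exact Or.inr (Or.inr (Or.inr h))

lemma chain_down {i k : Nat} {z y : Pt} (hi : i ≤ 2)
    (h1 : RT (.chain i (k+1)) z) (h2 : RT z y) : RT (.chain i k) y := by
  rcases h1 with ⟨j', hj', rfl⟩ | ⟨rfl, h⟩ | ⟨rfl, h⟩ | ⟨rfl, h⟩
  · exact chain_mono h2 (by omega)
  · rcases h with rfl | rfl | rfl | rfl <;> simp [RT] at h2 <;>
      rcases h2 with rfl | rfl | rfl <;> simp [RT]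
  · rcases h with rfl | rfl | rfl | rfl | rfl | rfl <;> simp [RT] at h2 <;>
      rcases h2 with rfl | rfl | rfl <;> simp [RT]
  · rcases h with rfl | rfl | rfl | rfl | rfl | rfl | rfl | rfl <;> simp [RT] at h2 <;>
      rcases h2 with rfl | rfl | rfl | rfl <;> simp [RT]

variable (V : Nat → FW P c₀ → Prop)

lemma sat_π₁ (x : FW P c₀) : satU (FR P c₀) V x .π₁ ↔
    (∃ j, x.1 = .chain 1 j ∧ V 0 x ∧ ∀ y : FW P c₀, RT x.1 y.1 → ¬ V 0 y) := by
  obtain ⟨p, hp⟩ := x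
  show satU (FR P c₀) V (pt p hp) (.and (MFU.or (MFU.dia (.α₀ 1)) (.α₀ 1))
    (.and (.neg (MFU.dia (.α₀ 0))) (.and (.neg (MFU.dia (.α₀ 2)))
      (.and (.var 0) (.neg (MFU.dia (.var 0))))))) ↔ _
  simp only [sat_and, sat_or, sat_dia, sat_neg, sat_α₀0, sat_α₀1, sat_α₀2]
  constructor
  · rintro ⟨h1, h2, h3, hv, hnv⟩
    have hpj : ∃ j, p = .chain 1 j := by
      rcases h1 with ⟨⟨y, hy⟩, hRy, hy1⟩ | h1
      · simp only at hy1; subst hy1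
        cases p
        case a => simp [RT] at hRy
        case b => simp [RT] at hRy
        case g => simp [RT] at hRy
        case d => simp [RT] at hRy
        case g1 => simp [RT] at hRy
        case d1 => simp [RT] at hRy
        case g2 => simp [RT] at hRy
        case d2 => simp [RT] at hRy
        case chain i2 j2 =>
          obtain ⟨rfl, -⟩ := (RT_chain_iff (by omega)).1 hRy
          exact ⟨j2, rfl⟩
        case e t k l =>
          exact (h2 ⟨wc 0 0 (by omega), RT_e_chain_iff.2 (Or.inl ⟨rfl, by omega⟩), rfl⟩).elim
      · exact ⟨0, h1⟩
    obtain ⟨j, rfl⟩ := hpj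
    exact ⟨j, rfl, hv, fun y hRy hVy => hnv ⟨y, hRy, hVy⟩⟩
  · rintro ⟨j, rfl, hv, hnv⟩
    refine ⟨?_, ?_, ?_, hv, ?_⟩
    · cases j with
      | zero => exact Or.inr rfl
      | succ j' => exact Or.inl ⟨wc 1 0 (by omega), (RT_chain_iff (by omega)).2 ⟨rfl, by omega⟩, rfl⟩
    · rintro ⟨⟨y, hy⟩, hRy, hy0⟩
      simp only at hy0; subst hy0
      obtain ⟨h, -⟩ := (RT_chain_iff (by omega)).1 hRy
      omega
    · rintro ⟨⟨y, hy⟩, hRy, hy2⟩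
      simp only at hy2; subst hy2
      obtain ⟨h, -⟩ := (RT_chain_iff (by omega)).1 hRy
      omega
    · rintro ⟨y, hRy, hVy⟩
      exact hnv y hRy hVy

lemma sat_π₂ (x : FW P c₀) : satU (FR P c₀) V x .π₂ ↔
    (∃ j, x.1 = .chain 1 (j+1) ∧ (∃ y : FW P c₀, RT x.1 y.1 ∧ V 0 y) ∧
      ∀ z : FW P c₀, RT x.1 z.1 → ∀ y : FW P c₀, RT z.1 y.1 → ¬ V 0 y) := by
  obtain ⟨p, hp⟩ := x
  show satU (FR P c₀) V (pt p hp) (.and (MFU.dia (.α₀ 1))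
    (.and (.neg (MFU.dia (.α₀ 0))) (.and (.neg (MFU.dia (.α₀ 2)))
      (.and (MFU.dia (.var 0)) (.neg (MFU.dia (MFU.dia (.var 0)))))))) ↔ _
  simp only [sat_and, sat_dia, sat_neg, sat_α₀0, sat_α₀1, sat_α₀2]
  constructor
  · rintro ⟨⟨⟨y, hy⟩, hRy, hy1⟩, h2, h3, hv, hnv⟩
    simp only at hy1; subst hy1
    have hpj : ∃ j, p = .chain 1 (j+1) := by
      cases p
      case a => simp [RT] at hRy
      case b => simp [RT] at hRy
      case g => simp [RT] at hRy
      case d => simp [RT] at hRy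
      case g1 => simp [RT] at hRy
      case d1 => simp [RT] at hRy
      case g2 => simp [RT] at hRy
      case d2 => simp [RT] at hRy
      case chain i2 j2 =>
        obtain ⟨rfl, hlt⟩ := (RT_chain_iff (by omega)).1 hRy
        cases j2 with
        | zero => omega
        | succ j' => exact ⟨j', rfl⟩
      case e t k l =>
        exact (h2 ⟨wc 0 0 (by omega), RT_e_chain_iff.2 (Or.inl ⟨rfl, by omega⟩), rfl⟩).elim
    obtain ⟨j, rfl⟩ := hpj
    exact ⟨j, rfl, hv, fun z hRz y hRy hVy => hnv ⟨z, hRz, y, hRy, hVy⟩⟩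
  · rintro ⟨j, rfl, ⟨y, hRy, hVy⟩, hnv⟩
    refine ⟨⟨wc 1 0 (by omega), (RT_chain_iff (by omega)).2 ⟨rfl, by omega⟩, rfl⟩, ?_, ?_,
      ⟨y, hRy, hVy⟩, ?_⟩
    · rintro ⟨⟨z, hz⟩, hRz, hz0⟩
      simp only at hz0; subst hz0
      obtain ⟨h, -⟩ := (RT_chain_iff (by omega)).1 hRz
      omega
    · rintro ⟨⟨z, hz⟩, hRz, hz2⟩
      simp only at hz2; subst hz2
      obtain ⟨h, -⟩ := (RT_chain_iff (by omega)).1 hRz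
      omega
    · rintro ⟨z, hRz, y', hRy', hVy'⟩
      exact hnv z hRz y' hRy' hVy'

end Eps

section Eps2
variable {P : List Instr} {c₀ : Config} (V : Nat → FW P c₀ → Prop)

lemma sat_τ₁ (x : FW P c₀) : satU (FR P c₀) V x .τ₁ ↔
    (∃ j, x.1 = .chain 2 j ∧ V 1 x ∧ ∀ y : FW P c₀, RT x.1 y.1 → ¬ V 1 y) := by
  obtain ⟨p, hp⟩ := x
  show satU (FR P c₀) V (pt p hp) (.and (MFU.or (MFU.dia (.α₀ 2)) (.α₀ 2))
    (.and (.neg (MFU.dia (.α₀ 0))) (.and (.neg (MFU.dia (.α₀ 1)))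
      (.and (.var 1) (.neg (MFU.dia (.var 1))))))) ↔ _
  simp only [sat_and, sat_or, sat_dia, sat_neg, sat_α₀0, sat_α₀1, sat_α₀2]
  constructor
  · rintro ⟨h1, h2, h3, hv, hnv⟩
    have hpj : ∃ j, p = .chain 2 j := by
      rcases h1 with ⟨⟨y, hy⟩, hRy, hy1⟩ | h1
      · simp only at hy1; subst hy1
        cases p
        case a => simp [RT] at hRy
        case b => simp [RT] at hRy
        case g => simp [RT] at hRy
        case d => simp [RT] at hRy
        case g1 => simp [RT] at hRy
        case d1 => simp [RT] at hRy
        case g2 => simp [RT] at hRy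
        case d2 => simp [RT] at hRy
        case chain i2 j2 =>
          obtain ⟨rfl, -⟩ := (RT_chain_iff (by omega)).1 hRy
          exact ⟨j2, rfl⟩
        case e t k l =>
          exact (h2 ⟨wc 0 0 (by omega), RT_e_chain_iff.2 (Or.inl ⟨rfl, by omega⟩), rfl⟩).elim
      · exact ⟨0, h1⟩
    obtain ⟨j, rfl⟩ := hpj
    exact ⟨j, rfl, hv, fun y hRy hVy => hnv ⟨y, hRy, hVy⟩⟩
  · rintro ⟨j, rfl, hv, hnv⟩
    refine ⟨?_, ?_, ?_, hv, ?_⟩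
    · cases j with
      | zero => exact Or.inr rfl
      | succ j' => exact Or.inl ⟨wc 2 0 (by omega), (RT_chain_iff (by omega)).2 ⟨rfl, by omega⟩, rfl⟩
    · rintro ⟨⟨y, hy⟩, hRy, hy0⟩
      simp only at hy0; subst hy0
      obtain ⟨h, -⟩ := (RT_chain_iff (by omega)).1 hRy
      omega
    · rintro ⟨⟨y, hy⟩, hRy, hy2⟩
      simp only at hy2; subst hy2
      obtain ⟨h, -⟩ := (RT_chain_iff (by omega)).1 hRy
      omega
    · rintro ⟨y, hRy, hVy⟩
      exact hnv y hRy hVy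

lemma sat_τ₂ (x : FW P c₀) : satU (FR P c₀) V x .τ₂ ↔
    (∃ j, x.1 = .chain 2 (j+1) ∧ (∃ y : FW P c₀, RT x.1 y.1 ∧ V 1 y) ∧
      ∀ z : FW P c₀, RT x.1 z.1 → ∀ y : FW P c₀, RT z.1 y.1 → ¬ V 1 y) := by
  obtain ⟨p, hp⟩ := x
  show satU (FR P c₀) V (pt p hp) (.and (MFU.dia (.α₀ 2))
    (.and (.neg (MFU.dia (.α₀ 0))) (.and (.neg (MFU.dia (.α₀ 1)))
      (.and (MFU.dia (.var 1)) (.neg (MFU.dia (MFU.dia (.var 1)))))))) ↔ _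
  simp only [sat_and, sat_dia, sat_neg, sat_α₀0, sat_α₀1, sat_α₀2]
  constructor
  · rintro ⟨⟨⟨y, hy⟩, hRy, hy1⟩, h2, h3, hv, hnv⟩
    simp only at hy1; subst hy1
    have hpj : ∃ j, p = .chain 2 (j+1) := by
      cases p
      case a => simp [RT] at hRy
      case b => simp [RT] at hRy
      case g => simp [RT] at hRy
      case d => simp [RT] at hRy
      case g1 => simp [RT] at hRy
      case d1 => simp [RT] at hRy
      case g2 => simp [RT] at hRy
      case d2 => simp [RT] at hRy
      case chain i2 j2 =>
        obtain ⟨rfl, hlt⟩ := (RT_chain_iff (by omega)).1 hRy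
        cases j2 with
        | zero => omega
        | succ j' => exact ⟨j', rfl⟩
      case e t k l =>
        exact (h2 ⟨wc 0 0 (by omega), RT_e_chain_iff.2 (Or.inl ⟨rfl, by omega⟩), rfl⟩).elim
    obtain ⟨j, rfl⟩ := hpj
    exact ⟨j, rfl, hv, fun z hRz y hRy hVy => hnv ⟨z, hRz, y, hRy, hVy⟩⟩
  · rintro ⟨j, rfl, ⟨y, hRy, hVy⟩, hnv⟩
    refine ⟨⟨wc 2 0 (by omega), (RT_chain_iff (by omega)).2 ⟨rfl, by omega⟩, rfl⟩, ?_, ?_,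
      ⟨y, hRy, hVy⟩, ?_⟩
    · rintro ⟨⟨z, hz⟩, hRz, hz0⟩
      simp only at hz0; subst hz0
      obtain ⟨h, -⟩ := (RT_chain_iff (by omega)).1 hRz
      omega
    · rintro ⟨⟨z, hz⟩, hRz, hz2⟩
      simp only at hz2; subst hz2
      obtain ⟨h, -⟩ := (RT_chain_iff (by omega)).1 hRz
      omega
    · rintro ⟨z, hRz, y', hRy', hVy'⟩
      exact hnv z hRz y' hRy' hVy'

end Eps2

section EpsCore
variable {P : List Instr} {c₀ : Config}

def Hyp1 (V : Nat → FW P c₀ → Prop) (A : MFU) (k : Nat) : Prop :=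
  satU (FR P c₀) V (wc 1 k (by omega)) A ∧
  ∀ y : FW P c₀, satU (FR P c₀) V y A → ∃ j, k ≤ j ∧ y.1 = .chain 1 j

def Hyp2 (V : Nat → FW P c₀ → Prop) (B : MFU) (l : Nat) : Prop :=
  satU (FR P c₀) V (wc 2 l (by omega)) B ∧
  ∀ y : FW P c₀, satU (FR P c₀) V y B → ∃ j, l ≤ j ∧ y.1 = .chain 2 j

variable (V : Nat → FW P c₀ → Prop)

lemma sat_eps_e {t k l : Nat} (hr : Reach P c₀ (t,k,l)) {A B : MFU}
    (hA : Hyp1 V A k) (hB : Hyp2 V B l) :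
    satU (FR P c₀) V ⟨.e t k l, hr⟩ (.eps t A B) := by
  show satU (FR P c₀) V (pt (.e t k l) hr) (.and (MFU.dia (.alpha 0 t)) (.and (.neg (MFU.dia (.alpha 0 (t+1))))
    (.and (MFU.dia A) (.and (.neg (MFU.dia (MFU.dia A)))
      (.and (MFU.dia B) (.neg (MFU.dia (MFU.dia B))))))))
  simp only [sat_and, sat_dia, sat_neg, sat_alpha0]
  refine ⟨⟨wc 0 t (by omega), RT_e_chain_iff.2 (Or.inl ⟨rfl, le_refl t⟩), rfl⟩, ?_,
    ⟨wc 1 k (by omega), RT_e_chain_iff.2 (Or.inr (Or.inl ⟨rfl, le_refl k⟩)), hA.1⟩, ?_,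
    ⟨wc 2 l (by omega), RT_e_chain_iff.2 (Or.inr (Or.inr ⟨rfl, le_refl l⟩)), hB.1⟩, ?_⟩
  · rintro ⟨⟨y, hy⟩, hRy, hye⟩
    simp only at hye; subst hye
    rcases RT_e_chain_iff.1 hRy with ⟨h, hle⟩ | ⟨h, _⟩ | ⟨h, _⟩ <;> omega
  · rintro ⟨⟨z, hz⟩, hRz, y, hRy, hyA⟩
    obtain ⟨j, hkj, hyj⟩ := hA.2 y hyA
    rw [hyj] at hRy
    rcases hRz with ⟨j', hj', rfl⟩ | ⟨j', hj', rfl⟩ | ⟨j', hj', rfl⟩ | hz'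
    · exact absurd ((RT_chain_iff (by omega)).1 hRy).1 (by omega)
    · obtain ⟨-, hlt⟩ := (RT_chain_iff (by omega)).1 hRy
      omega
    · exact absurd ((RT_chain_iff (by omega)).1 hRy).1 (by omega)
    · rcases hz' with rfl | rfl | rfl | rfl | rfl | rfl | rfl | rfl <;> simp [RT] at hRy
  · rintro ⟨⟨z, hz⟩, hRz, y, hRy, hyB⟩
    obtain ⟨j, hkj, hyj⟩ := hB.2 y hyB
    rw [hyj] at hRy
    rcases hRz with ⟨j', hj', rfl⟩ | ⟨j', hj', rfl⟩ | ⟨j', hj', rfl⟩ | hz'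
    · exact absurd ((RT_chain_iff (by omega)).1 hRy).1 (by omega)
    · exact absurd ((RT_chain_iff (by omega)).1 hRy).1 (by omega)
    · obtain ⟨-, hlt⟩ := (RT_chain_iff (by omega)).1 hRy
      omega
    · rcases hz' with rfl | rfl | rfl | rfl | rfl | rfl | rfl | rfl <;> simp [RT] at hRy

lemma eps_decode {x : FW P c₀} {t : Nat} {A B : MFU}
    (hA : ∀ y : FW P c₀, satU (FR P c₀) V y A → ∃ j, y.1 = .chain 1 j)
    (hB : ∀ y : FW P c₀, satU (FR P c₀) V y B → ∃ j, y.1 = .chain 2 j)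
    (hx : satU (FR P c₀) V x (.eps t A B)) :
    ∃ k l, Reach P c₀ (t,k,l) ∧ x.1 = .e t k l ∧
      satU (FR P c₀) V (wc 1 k (by omega)) A ∧
      (∀ j, satU (FR P c₀) V (wc 1 j (by omega)) A → k ≤ j) ∧
      satU (FR P c₀) V (wc 2 l (by omega)) B ∧
      (∀ j, satU (FR P c₀) V (wc 2 j (by omega)) B → l ≤ j) := by
  obtain ⟨p, hp⟩ := x
  have hx' : satU (FR P c₀) V (pt p hp) (.and (MFU.dia (.alpha 0 t))
    (.and (.neg (MFU.dia (.alpha 0 (t+1))))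
    (.and (MFU.dia A) (.and (.neg (MFU.dia (MFU.dia A)))
      (.and (MFU.dia B) (.neg (MFU.dia (MFU.dia B)))))))) := hx
  rw [sat_and, sat_and, sat_and, sat_and, sat_and] at hx'
  obtain ⟨hd0, h1, hdA, h3, hdB, h5⟩ := hx'
  rw [sat_dia] at hd0 hdA hdB
  rw [sat_neg] at h1 h3 h5
  simp only [sat_dia] at h1 h3 h5
  obtain ⟨y0, hR0, hy0⟩ := hd0
  rw [sat_alpha0] at hy0
  obtain ⟨yA, hRA, hyA⟩ := hdA
  obtain ⟨yB, hRB, hyB⟩ := hdB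
  obtain ⟨jA, hyAj⟩ := hA yA hyA
  obtain ⟨jB, hyBj⟩ := hB yB hyB
  rw [hy0] at hR0
  cases p
  case a => simp [RT] at hR0
  case b => simp [RT] at hR0
  case g => simp [RT] at hR0
  case d => simp [RT] at hR0
  case g1 => simp [RT] at hR0
  case d1 => simp [RT] at hR0
  case g2 => simp [RT] at hR0
  case d2 => simp [RT] at hR0
  case chain i2 j2 =>
    obtain ⟨rfl, -⟩ := (RT_chain_iff (by omega)).1 hR0
    rw [hyAj] at hRA
    exact absurd ((RT_chain_iff (by omega)).1 hRA).1 (by omega)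
  case e t2 k2 l2 =>
    have ht2 : t ≤ t2 := by
      rcases RT_e_chain_iff.1 hR0 with ⟨-, h⟩ | ⟨h, -⟩ | ⟨h, -⟩ <;> omega
    have ht2' : t2 ≤ t := by
      by_contra hc
      push_neg at hc
      exact h1 ⟨wc 0 (t+1) (by omega), RT_e_chain_iff.2 (Or.inl ⟨rfl, by omega⟩),
        (sat_alpha0 V _ _).2 rfl⟩
    obtain rfl : t2 = t := by omega
    have hjAk : jA ≤ k2 := by
      rw [hyAj] at hRA
      rcases RT_e_chain_iff.1 hRA with ⟨h, -⟩ | ⟨-, h⟩ | ⟨h, -⟩ <;> omega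
    have hjBl : jB ≤ l2 := by
      rw [hyBj] at hRB
      rcases RT_e_chain_iff.1 hRB with ⟨h, -⟩ | ⟨h, -⟩ | ⟨-, h⟩ <;> omega
    have hminA : ∀ j, satU (FR P c₀) V (wc 1 j (by omega)) A → k2 ≤ j := by
      intro j hj
      by_contra hc
      push_neg at hc
      exact h3 ⟨wc 1 (j+1) (by omega), RT_e_chain_iff.2 (Or.inr (Or.inl ⟨rfl, by omega⟩)),
        wc 1 j (by omega), (RT_chain_iff (by omega)).2 ⟨rfl, by omega⟩, hj⟩
    have hminB : ∀ j, satU (FR P c₀) V (wc 2 j (by omega)) B → l2 ≤ j := by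
      intro j hj
      by_contra hc
      push_neg at hc
      exact h5 ⟨wc 2 (j+1) (by omega), RT_e_chain_iff.2 (Or.inr (Or.inr ⟨rfl, by omega⟩)),
        wc 2 j (by omega), (RT_chain_iff (by omega)).2 ⟨rfl, by omega⟩, hj⟩
    have hyA' : satU (FR P c₀) V (wc 1 jA (by omega)) A := by
      have he : yA = wc 1 jA (by omega) := Subtype.ext hyAj
      rwa [he] at hyA
    have hyB' : satU (FR P c₀) V (wc 2 jB (by omega)) B := by
      have he : yB = wc 2 jB (by omega) := Subtype.ext hyBj
      rwa [he] at hyB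
    obtain rfl : jA = k2 := by have := hminA jA hyA'; omega
    obtain rfl : jB = l2 := by have := hminB jB hyB'; omega
    exact ⟨jA, jB, hp, rfl, hyA', hminA, hyB', hminB⟩

end EpsCore

section Transfer
variable {P : List Instr} {c₀ : Config} (V : Nat → FW P c₀ → Prop)

lemma hyp1_alpha (k : Nat) : Hyp1 V (.alpha 1 k) k :=
  ⟨(sat_alpha1 V k _).2 rfl, fun y hy => ⟨k, le_refl _, (sat_alpha1 V k y).1 hy⟩⟩

lemma hyp2_alpha (l : Nat) : Hyp2 V (.alpha 2 l) l :=
  ⟨(sat_alpha2 V l _).2 rfl, fun y hy => ⟨l, le_refl _, (sat_alpha2 V l y).1 hy⟩⟩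

lemma hyp1_α₀ : Hyp1 V (.α₀ 1) 0 :=
  ⟨(sat_α₀1 V _).2 rfl, fun y hy => ⟨0, le_refl _, (sat_α₀1 V y).1 hy⟩⟩

lemma hyp2_α₀ : Hyp2 V (.α₀ 2) 0 :=
  ⟨(sat_α₀2 V _).2 rfl, fun y hy => ⟨0, le_refl _, (sat_α₀2 V y).1 hy⟩⟩

lemma pi1_shape : ∀ y : FW P c₀, satU (FR P c₀) V y .π₁ → ∃ j, y.1 = .chain 1 j := by
  intro y hy
  obtain ⟨j, hj, -, -⟩ := (sat_π₁ V y).1 hy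
  exact ⟨j, hj⟩

lemma pi2_shape : ∀ y : FW P c₀, satU (FR P c₀) V y .π₂ → ∃ j, y.1 = .chain 1 j := by
  intro y hy
  obtain ⟨j, hj, -, -⟩ := (sat_π₂ V y).1 hy
  exact ⟨j+1, hj⟩

lemma tau1_shape : ∀ y : FW P c₀, satU (FR P c₀) V y .τ₁ → ∃ j, y.1 = .chain 2 j := by
  intro y hy
  obtain ⟨j, hj, -, -⟩ := (sat_τ₁ V y).1 hy
  exact ⟨j, hj⟩

lemma tau2_shape : ∀ y : FW P c₀, satU (FR P c₀) V y .τ₂ → ∃ j, y.1 = .chain 2 j := by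
  intro y hy
  obtain ⟨j, hj, -, -⟩ := (sat_τ₂ V y).1 hy
  exact ⟨j+1, hj⟩

lemma alpha1_shape (m : Nat) : ∀ y : FW P c₀, satU (FR P c₀) V y (.alpha 1 m) →
    ∃ j, y.1 = .chain 1 j := fun y hy => ⟨m, (sat_alpha1 V m y).1 hy⟩

lemma alpha2_shape (n : Nat) : ∀ y : FW P c₀, satU (FR P c₀) V y (.alpha 2 n) →
    ∃ j, y.1 = .chain 2 j := fun y hy => ⟨n, (sat_alpha2 V n y).1 hy⟩

lemma α₀1_shape : ∀ y : FW P c₀, satU (FR P c₀) V y (.α₀ 1) →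
    ∃ j, y.1 = .chain 1 j := fun y hy => ⟨0, (sat_α₀1 V y).1 hy⟩

lemma α₀2_shape : ∀ y : FW P c₀, satU (FR P c₀) V y (.α₀ 2) →
    ∃ j, y.1 = .chain 2 j := fun y hy => ⟨0, (sat_α₀2 V y).1 hy⟩

lemma pi1_hyps {k : Nat} (h : satU (FR P c₀) V (wc 1 k (by omega)) .π₁) :
    Hyp1 V .π₁ k ∧ Hyp1 V .π₂ (k+1) := by
  obtain ⟨j, hj, hV, hnV⟩ := (sat_π₁ V _).1 h
  obtain rfl : k = j := by
    have := Pt.chain.inj hj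
    omega
  constructor
  · refine ⟨h, fun y hy => ?_⟩
    obtain ⟨j', hyj, hV', -⟩ := (sat_π₁ V y).1 hy
    refine ⟨j', ?_, hyj⟩
    by_contra hc
    push_neg at hc
    exact hnV y (by rw [hyj]; exact (RT_chain_iff (by omega)).2 ⟨rfl, by omega⟩) hV'
  · constructor
    · refine (sat_π₂ V _).2 ⟨k, rfl, ⟨wc 1 k (by omega),
        (RT_chain_iff (by omega)).2 ⟨rfl, by omega⟩, hV⟩, ?_⟩
      intro z hRz y hRy hVy
      exact hnV y (chain_down (by omega) hRz hRy) hVy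
    · intro y hy
      obtain ⟨j', hyj, ⟨w, hRw, hVw⟩, -⟩ := (sat_π₂ V y).1 hy
      refine ⟨j'+1, ?_, hyj⟩
      by_contra hc
      push_neg at hc
      rw [hyj] at hRw
      exact hnV w (chain_mono hRw (by omega)) hVw

lemma tau1_hyps {l : Nat} (h : satU (FR P c₀) V (wc 2 l (by omega)) .τ₁) :
    Hyp2 V .τ₁ l ∧ Hyp2 V .τ₂ (l+1) := by
  obtain ⟨j, hj, hV, hnV⟩ := (sat_τ₁ V _).1 h
  obtain rfl : l = j := by
    have := Pt.chain.inj hj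
    omega
  constructor
  · refine ⟨h, fun y hy => ?_⟩
    obtain ⟨j', hyj, hV', -⟩ := (sat_τ₁ V y).1 hy
    refine ⟨j', ?_, hyj⟩
    by_contra hc
    push_neg at hc
    exact hnV y (by rw [hyj]; exact (RT_chain_iff (by omega)).2 ⟨rfl, by omega⟩) hV'
  · constructor
    · refine (sat_τ₂ V _).2 ⟨l, rfl, ⟨wc 2 l (by omega),
        (RT_chain_iff (by omega)).2 ⟨rfl, by omega⟩, hV⟩, ?_⟩
      intro z hRz y hRy hVy
      exact hnV y (chain_down (by omega) hRz hRy) hVy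
    · intro y hy
      obtain ⟨j', hyj, ⟨w, hRw, hVw⟩, -⟩ := (sat_τ₂ V y).1 hy
      refine ⟨j'+1, ?_, hyj⟩
      by_contra hc
      push_neg at hc
      rw [hyj] at hRw
      exact hnV w (chain_mono hRw (by omega)) hVw

lemma pi2_dec {k : Nat} (h : satU (FR P c₀) V (wc 1 k (by omega)) .π₂)
    (hmin : ∀ j, satU (FR P c₀) V (wc 1 j (by omega)) .π₂ → k ≤ j) :
    k ≠ 0 ∧ Hyp1 V .π₁ (k-1) := by
  obtain ⟨j0, hj0, ⟨w, hRw, hVw⟩, hnv⟩ := (sat_π₂ V _).1 h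
  obtain rfl : k = j0 + 1 := by
    have := Pt.chain.inj hj0
    omega
  obtain ⟨w, hwok⟩ := w
  have hwc : ∃ jw, jw < j0 + 1 ∧ w = .chain 1 jw := by
    rcases hRw with ⟨jw, hjw, rfl⟩ | ⟨h10, -⟩ | ⟨-, htail⟩ | ⟨h12, -⟩
    · exact ⟨jw, hjw, rfl⟩
    · omega
    · exfalso
      refine hnv (wc 1 0 (by omega)) ((RT_chain_iff (by omega)).2 ⟨rfl, by omega⟩)
        ⟨w, hwok⟩ ?_ hVw
      rcases htail with rfl | rfl | rfl | rfl | rfl | rfl <;> simp [wc, RT]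
    · omega
  obtain ⟨jw, hjw, rfl⟩ := hwc
  have hsatπ₁ : satU (FR P c₀) V (wc 1 jw (by omega)) .π₁ := by
    refine (sat_π₁ V _).2 ⟨jw, rfl, ?_, ?_⟩
    · exact hVw
    · intro y hRy hVy
      exact hnv (wc 1 jw (by omega)) ((RT_chain_iff (by omega)).2 ⟨rfl, hjw⟩) y hRy hVy
  have hπ₂' := (pi1_hyps V hsatπ₁).2.1
  have hle := hmin (jw+1) hπ₂'
  obtain rfl : jw = j0 := by omega
  exact ⟨by omega, by simpa using (pi1_hyps V hsatπ₁).1⟩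

lemma tau2_dec {l : Nat} (h : satU (FR P c₀) V (wc 2 l (by omega)) .τ₂)
    (hmin : ∀ j, satU (FR P c₀) V (wc 2 j (by omega)) .τ₂ → l ≤ j) :
    l ≠ 0 ∧ Hyp2 V .τ₁ (l-1) := by
  obtain ⟨j0, hj0, ⟨w, hRw, hVw⟩, hnv⟩ := (sat_τ₂ V _).1 h
  obtain rfl : l = j0 + 1 := by
    have := Pt.chain.inj hj0
    omega
  obtain ⟨w, hwok⟩ := w
  have hwc : ∃ jw, jw < j0 + 1 ∧ w = .chain 2 jw := by
    rcases hRw with ⟨jw, hjw, rfl⟩ | ⟨h10, -⟩ | ⟨h12, -⟩ | ⟨-, htail⟩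
    · exact ⟨jw, hjw, rfl⟩
    · omega
    · omega
    · exfalso
      refine hnv (wc 2 0 (by omega)) ((RT_chain_iff (by omega)).2 ⟨rfl, by omega⟩)
        ⟨w, hwok⟩ ?_ hVw
      rcases htail with rfl | rfl | rfl | rfl | rfl | rfl | rfl | rfl <;> simp [wc, RT]
  obtain ⟨jw, hjw, rfl⟩ := hwc
  have hsatτ₁ : satU (FR P c₀) V (wc 2 jw (by omega)) .τ₁ := by
    refine (sat_τ₁ V _).2 ⟨jw, rfl, ?_, ?_⟩
    · exact hVw
    · intro y hRy hVy
      exact hnv (wc 2 jw (by omega)) ((RT_chain_iff (by omega)).2 ⟨rfl, hjw⟩) y hRy hVy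
  have hτ₂' := (tau1_hyps V hsatτ₁).2.1
  have hle := hmin (jw+1) hτ₂'
  obtain rfl : jw = j0 := by omega
  exact ⟨by omega, by simpa using (tau1_hyps V hsatτ₁).1⟩

end Transfer

section Final
variable {P : List Instr} {c₀ : Config} (V : Nat → FW P c₀ → Prop)

lemma sat_foldr (L : List MFU) (x : FW P c₀) :
    satU (FR P c₀) V (x) (L.foldr .and .top) ↔ ∀ φ ∈ L, satU (FR P c₀) V x φ := by
  induction L with
  | nil => simpa using sat_top V
  | cons φ L ih =>
    rw [List.foldr_cons, sat_and, ih]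
    simp

lemma axI_valid {I : Instr} (hI : I ∈ P) (x : FW P c₀) :
    satU (FR P c₀) V x (AxI I) := by
  cases I with
  | inc1 s' t' =>
    show satU (FR P c₀) V x (MFU.imp (MFU.uEx (.eps s' .π₁ .τ₁)) (MFU.uEx (.eps t' .π₂ .τ₁)))
    rw [sat_imp, sat_uEx, sat_uEx]
    rintro ⟨y, hy⟩
    obtain ⟨k, l, hr, -, hπ, -, hτ, -⟩ := eps_decode V (pi1_shape V) (tau1_shape V) hy
    have hreach : Reach P c₀ (t', k+1, l) :=
      hr.tail ⟨.inc1 s' t', hI, rfl, rfl⟩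
    exact ⟨⟨.e t' (k+1) l, hreach⟩, sat_eps_e V hreach (pi1_hyps V hπ).2 (tau1_hyps V hτ).1⟩
  | inc2 s' t' =>
    show satU (FR P c₀) V x (MFU.imp (MFU.uEx (.eps s' .π₁ .τ₁)) (MFU.uEx (.eps t' .π₁ .τ₂)))
    rw [sat_imp, sat_uEx, sat_uEx]
    rintro ⟨y, hy⟩
    obtain ⟨k, l, hr, -, hπ, -, hτ, -⟩ := eps_decode V (pi1_shape V) (tau1_shape V) hy
    have hreach : Reach P c₀ (t', k, l+1) :=
      hr.tail ⟨.inc2 s' t', hI, rfl, rfl⟩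
    exact ⟨⟨.e t' k (l+1), hreach⟩, sat_eps_e V hreach (pi1_hyps V hπ).1 (tau1_hyps V hτ).2⟩
  | dec1 s' t' t'' =>
    show satU (FR P c₀) V x (.and
      (MFU.imp (MFU.uEx (.eps s' .π₂ .τ₁)) (MFU.uEx (.eps t' .π₁ .τ₁)))
      (MFU.imp (MFU.uEx (.eps s' (.α₀ 1) .τ₁)) (MFU.uEx (.eps t'' (.α₀ 1) .τ₁))))
    rw [sat_and, sat_imp, sat_imp, sat_uEx, sat_uEx, sat_uEx, sat_uEx]
    constructor
    · rintro ⟨y, hy⟩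
      obtain ⟨k, l, hr, -, hπ, hπmin, hτ, -⟩ := eps_decode V (pi2_shape V) (tau1_shape V) hy
      obtain ⟨hk0, hyp⟩ := pi2_dec V hπ hπmin
      have hreach : Reach P c₀ (t', k-1, l) :=
        hr.tail ⟨.dec1 s' t' t'', hI, rfl, Or.inl ⟨hk0, rfl⟩⟩
      exact ⟨⟨.e t' (k-1) l, hreach⟩, sat_eps_e V hreach hyp (tau1_hyps V hτ).1⟩
    · rintro ⟨y, hy⟩
      obtain ⟨k, l, hr, -, hπ, -, hτ, -⟩ := eps_decode V (α₀1_shape V) (tau1_shape V) hy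
      obtain rfl : k = 0 := by
        have := (sat_α₀1 V _).1 hπ
        exact (Pt.chain.inj this).2
      have hreach : Reach P c₀ (t'', 0, l) :=
        hr.tail ⟨.dec1 s' t' t'', hI, rfl, Or.inr ⟨rfl, rfl⟩⟩
      exact ⟨⟨.e t'' 0 l, hreach⟩, sat_eps_e V hreach (hyp1_α₀ V) (tau1_hyps V hτ).1⟩
  | dec2 s' t' t'' =>
    show satU (FR P c₀) V x (.and
      (MFU.imp (MFU.uEx (.eps s' .π₁ .τ₂)) (MFU.uEx (.eps t' .π₁ .τ₁)))
      (MFU.imp (MFU.uEx (.eps s' .π₁ (.α₀ 2))) (MFU.uEx (.eps t'' .π₁ (.α₀ 2)))))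
    rw [sat_and, sat_imp, sat_imp, sat_uEx, sat_uEx, sat_uEx, sat_uEx]
    constructor
    · rintro ⟨y, hy⟩
      obtain ⟨k, l, hr, -, hπ, -, hτ, hτmin⟩ := eps_decode V (pi1_shape V) (tau2_shape V) hy
      obtain ⟨hl0, hyp⟩ := tau2_dec V hτ hτmin
      have hreach : Reach P c₀ (t', k, l-1) :=
        hr.tail ⟨.dec2 s' t' t'', hI, rfl, Or.inl ⟨hl0, rfl⟩⟩
      exact ⟨⟨.e t' k (l-1), hreach⟩, sat_eps_e V hreach (pi1_hyps V hπ).1 hyp⟩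
    · rintro ⟨y, hy⟩
      obtain ⟨k, l, hr, -, hπ, -, hτ, -⟩ := eps_decode V (pi1_shape V) (α₀2_shape V) hy
      obtain rfl : l = 0 := by
        have := (sat_α₀2 V _).1 hτ
        exact (Pt.chain.inj this).2
      have hreach : Reach P c₀ (t'', k, 0) :=
        hr.tail ⟨.dec2 s' t' t'', hI, rfl, Or.inr ⟨rfl, rfl⟩⟩
      exact ⟨⟨.e t'' k 0, hreach⟩, sat_eps_e V hreach (pi1_hyps V hπ).1 (hyp2_α₀ V)⟩

lemma sat_AxP (x : FW P c₀) : satU (FR P c₀) V x (AxP P) := by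
  rw [AxP, sat_foldr]
  intro φ hφ
  rw [List.mem_map] at hφ
  obtain ⟨I, hI, rfl⟩ := hφ
  exact axI_valid V hI x

end Final

lemma satU_subst {W : Type} (R : W → W → Prop) (Vv : Nat → W → Prop) (σ : Nat → MFU)
    (φ : MFU) : ∀ x, satU R Vv x (MFU.subst σ φ) ↔
      satU R (fun n y => satU R Vv y (σ n)) x φ := by
  induction φ <;> intro x <;> simp [MFU.subst, satU, *]

/-- if 𝔟 is not reachable from 𝔞, then ψ(𝔟) is not unifiable in any L with
K_u ⊆ L ⊆ K4_u. -/
theorem psiB_not_unifiable :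
    ∀ (P : List Instr) (s m n t k l : Nat) (L : Set MFU),
      Deterministic P → Ku ⊆ L → L ⊆ K4u →
      ¬ Reach P (s, m, n) (t, k, l) →
      ∀ σ, MFU.subst σ (psiB P s m n t k l) ∉ L := by
  intro P s m n t k l L _ _ hK4 hnr σ hmem
  have hval := hK4 hmem (FW P (s,m,n)) (FR P (s,m,n))
    (fun x y z hxy hyz => Relation.TransGen.trans hxy hyz)
    (fun _ _ => False) wa
  rw [satU_subst] at hval
  set V : Nat → FW P (s,m,n) → Prop :=
    fun n' y => satU (FR P (s,m,n)) (fun _ _ => False) y (σ n') with hV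
  have hval' : satU (FR P (s,m,n)) V wa (MFU.imp
    (MFU.and (AxP P) (MFU.uEx (MFU.eps s (MFU.alpha 1 m) (MFU.alpha 2 n))))
    (MFU.uEx (MFU.eps t (MFU.alpha 1 k) (MFU.alpha 2 l)))) := hval
  rw [sat_imp, sat_and, sat_uEx, sat_uEx] at hval'
  have hstart : Reach P (s,m,n) (s,m,n) := Relation.ReflTransGen.refl
  obtain ⟨y, hy⟩ := hval' ⟨sat_AxP V wa,
    ⟨⟨.e s m n, hstart⟩, sat_eps_e V hstart (hyp1_alpha V m) (hyp2_alpha V n)⟩⟩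
  obtain ⟨k2, l2, hr, -, hπ, -, hτ, -⟩ :=
    eps_decode V (alpha1_shape V k) (alpha2_shape V l) hy
  obtain rfl : k2 = k := by
    have := (sat_alpha1 V k _).1 hπ
    exact (Pt.chain.inj this).2
  obtain rfl : l2 = l := by
    have := (sat_alpha2 V l _).1 hτ
    exact (Pt.chain.inj this).2
  exact hnr hr
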